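/- In the setting of a representable shift equivalence where A and B have no zero columns, the vertex projections of the two Cuntz-Krieger families necessarily agree: if (S_v, S_c) is a Cuntz-Krieger family for G_C and (T_w, T_d) is a Cuntz-Krieger family for G_D on the same Hilbert space satisfying T_{d₁d₂} = S_{c₁⋯c_m} whenever ψ(d₁d₂) = c₁⋯c_m, then S_v = T_v for every vertex v ∈ V ⊔ W. -/

import Mathlib

universe u

/-- The edge set of a matrix `F` over `ℕ`: `E_F = { (v,w,n) : n < F v w }`. -/
def Edge {α β : Type u} (F : Matrix α β ℕ) : Type u :=
  {p : α × β × ℕ // p.2.2 < F p.1 p.2.1}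

/-- Source of an edge. -/
def Edge.src {α β : Type u} {F : Matrix α β ℕ} (e : Edge F) : α := e.val.1

/-- Range of an edge. -/
def Edge.rng {α β : Type u} {F : Matrix α β ℕ} (e : Edge F) : β := e.val.2.1

/-- An abstract edge system: a set of "edges" with source and range maps. -/
structure EdgeSys (α β : Type u) : Type (u + 1) where
  E : Type u
  src : E → α
  rng : E → β

/-- The edge system of a matrix over `ℕ`. -/
def esys {α β : Type u} (F : Matrix α β ℕ) : EdgeSys α β :=
  ⟨Edge F, Edge.src, Edge.rng⟩

/-- The product of edge systems: composable pairs of edges. -/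
def EdgeSys.prod {α β γ : Type u} (X : EdgeSys α β) (Y : EdgeSys β γ) : EdgeSys α γ :=
  ⟨{p : X.E × Y.E // X.rng p.1 = Y.src p.2},
   fun p => X.src p.val.1, fun p => Y.rng p.val.2⟩

/-- Powers of an edge system: paths of a given length (`pow 0` = vertices). -/
def EdgeSys.pow {α : Type u} (X : EdgeSys α α) : ℕ → EdgeSys α α
  | 0 => ⟨α, id, id⟩
  | 1 => X
  | n + 2 => X.prod (X.pow (n + 1))

/-- A path isomorphism between edge systems: a source- and range-preserving
bijection. -/
structure PIso {α β : Type u} (X Y : EdgeSys α β) : Type u where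
  e : X.E ≃ Y.E
  src_eq : ∀ x, Y.src (e x) = X.src x
  rng_eq : ∀ x, Y.rng (e x) = X.rng x

/-- Identity path isomorphism. -/
def PIso.refl {α β : Type u} (X : EdgeSys α β) : PIso X X :=
  ⟨Equiv.refl _, fun _ => rfl, fun _ => rfl⟩

/-- Inverse of a path isomorphism. -/
def PIso.symm {α β : Type u} {X Y : EdgeSys α β} (f : PIso X Y) : PIso Y X :=
  ⟨f.e.symm,
   fun y => by rw [← f.src_eq (f.e.symm y), Equiv.apply_symm_apply],
   fun y => by rw [← f.rng_eq (f.e.symm y), Equiv.apply_symm_apply]⟩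

/-- Composition of path isomorphisms. -/
def PIso.trans {α β : Type u} {X Y Z : EdgeSys α β} (f : PIso X Y) (g : PIso Y Z) :
    PIso X Z :=
  ⟨f.e.trans g.e,
   fun x => by rw [Equiv.trans_apply, g.src_eq, f.src_eq],
   fun x => by rw [Equiv.trans_apply, g.rng_eq, f.rng_eq]⟩

/-- Horizontal product `f × g` of path isomorphisms. -/
def PIso.hprod {α β γ : Type u} {X X' : EdgeSys α β} {Y Y' : EdgeSys β γ}
    (f : PIso X X') (g : PIso Y Y') : PIso (X.prod Y) (X'.prod Y') where
  e := Equiv.subtypeEquiv (f.e.prodCongr g.e) (by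
        intro p
        simp only [Equiv.prodCongr_apply, Prod.map]
        rw [f.rng_eq, g.src_eq])
  src_eq := fun x => f.src_eq x.val.1
  rng_eq := fun x => g.rng_eq x.val.2

/-- The associator path isomorphism `(X × Y) × Z ≅ X × (Y × Z)`. -/
def EdgeSys.assoc {α β γ δ : Type u} (X : EdgeSys α β) (Y : EdgeSys β γ)
    (Z : EdgeSys γ δ) : PIso ((X.prod Y).prod Z) (X.prod (Y.prod Z)) where
  e := { toFun := fun p =>
            ⟨(p.val.1.val.1, ⟨(p.val.1.val.2, p.val.2), p.property⟩), p.val.1.property⟩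
         invFun := fun q =>
            ⟨(⟨(q.val.1, q.val.2.val.1), q.property⟩, q.val.2.val.2), q.val.2.property⟩
         left_inv := fun p => rfl
         right_inv := fun q => rfl }
  src_eq := fun _ => rfl
  rng_eq := fun _ => rfl

/-- The iterated path isomorphism `φ^(m)` (with `m = k + 1`), moving an edge of
`R` past `m` edges: `φ^(m) = (φ × id) ∘ (id × φ × id) ∘ ⋯ ∘ (id × φ)`. -/
def PIso.iter {α β : Type u} {X : EdgeSys α α} {Y : EdgeSys β β} {R : EdgeSys α β}
    (φ : PIso (X.prod R) (R.prod Y)) :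
    (k : ℕ) → PIso ((X.pow (k + 1)).prod R) (R.prod (Y.pow (k + 1)))
  | 0 => φ
  | k + 1 =>
      (EdgeSys.assoc X (X.pow (k + 1)) R).trans
        (((PIso.refl X).hprod (φ.iter k)).trans
          ((EdgeSys.assoc X R (Y.pow (k + 1))).symm.trans
            ((φ.hprod (PIso.refl (Y.pow (k + 1)))).trans
              (EdgeSys.assoc R Y (Y.pow (k + 1))))))

/-- The canonical path isomorphism `X^(k+1) × X ≅ X^(k+2)`. -/
def EdgeSys.powShift {α : Type u} (X : EdgeSys α α) :
    (k : ℕ) → PIso ((X.pow (k + 1)).prod X) (X.pow (k + 2))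
  | 0 => PIso.refl (X.prod X)
  | k + 1 =>
      (EdgeSys.assoc X (X.pow (k + 1)) X).trans
        ((PIso.refl X).hprod (X.powShift k))

/-- A compatible shift equivalence of lag `k + 1` between `A` and `B`, via the
matrices `R` and `S`: path isomorphisms `φ_R, φ_S, ψ_A, ψ_B` satisfying
`φ_R^(m) = (id_R × ψ_B) ∘ (ψ_A⁻¹ × id_R)` and
`φ_S^(m) = (id_S × ψ_A) ∘ (ψ_B⁻¹ × id_S)` (with `m = k + 1`). -/
structure CompatSE {V W : Type u} (A : Matrix V V ℕ) (B : Matrix W W ℕ)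
    (R : Matrix V W ℕ) (S : Matrix W V ℕ) (k : ℕ) : Type u where
  φR : PIso ((esys A).prod (esys R)) ((esys R).prod (esys B))
  φS : PIso ((esys B).prod (esys S)) ((esys S).prod (esys A))
  ψA : PIso ((esys R).prod (esys S)) ((esys A).pow (k + 1))
  ψB : PIso ((esys S).prod (esys R)) ((esys B).pow (k + 1))
  compatR : φR.iter k =
    (ψA.symm.hprod (PIso.refl (esys R))).trans
      ((EdgeSys.assoc (esys R) (esys S) (esys R)).trans
        ((PIso.refl (esys R)).hprod ψB))
  compatS : φS.iter k =
    (ψB.symm.hprod (PIso.refl (esys S))).trans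
      ((EdgeSys.assoc (esys S) (esys R) (esys S)).trans
        ((PIso.refl (esys S)).hprod ψA))

/-- A matrix is essential if it has no zero rows and no zero columns. -/
def Essential {V W : Type u} (M : Matrix V W ℕ) : Prop :=
  (∀ v, ∃ w, M v w ≠ 0) ∧ (∀ w, ∃ v, M v w ≠ 0)

/-- The edge set of a matrix over a finite index set is finite. -/
noncomputable instance {U : Type u} [Fintype U] (M : Matrix U U ℕ) : Fintype (Edge M) :=
  @Fintype.ofEquiv _ (Σ u : U, Σ u' : U, Fin (M u u'))
    (@Sigma.instFintype _ _ (fun u => @Sigma.instFintype _ _ (fun u' => Fin.fintype (M u u')) _) _)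
    { toFun := fun x => ⟨(x.1, x.2.1, x.2.2.val), x.2.2.isLt⟩
      invFun := fun e => ⟨e.val.1, e.val.2.1, ⟨e.val.2.2, e.property⟩⟩
      left_inv := fun _ => rfl
      right_inv := fun _ => rfl }

/-- A Cuntz–Krieger family for the directed graph of a matrix `M` over `ℕ`,
acting on a Hilbert space `H`: pairwise orthogonal projections `P u` and
operators `T e` with `T e* T e = P (r e)` and, for every vertex `u` emitting at
least one (and finitely many) edges, `Σ_{s(e) = u} T e T e* = P u`. -/
structure CKFam {U : Type} [Fintype U] [DecidableEq U] (M : Matrix U U ℕ)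
    (H : Type) [NormedAddCommGroup H] [InnerProductSpace ℂ H] [CompleteSpace H] :
    Type where
  P : U → H →L[ℂ] H
  T : Edge M → H →L[ℂ] H
  proj : ∀ u, P u * P u = P u
  selfadj : ∀ u, star (P u) = P u
  orth : ∀ u u', u ≠ u' → P u * P u' = 0
  ck1 : ∀ e, star (T e) * T e = P (Edge.rng e)
  ck2 : ∀ u, 0 < ∑ u', M u u' →
    ∑ e ∈ Finset.univ.filter (fun e : Edge M => Edge.src e = u),
      T e * star (T e) = P u

/-- The operator associated to a path (a product of edge operators). -/
noncomputable def pathOp {U : Type} {M : Matrix U U ℕ} {H : Type}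
    [NormedAddCommGroup H] [InnerProductSpace ℂ H] [CompleteSpace H]
    (T : Edge M → H →L[ℂ] H) : (m : ℕ) → ((esys M).pow m).E → (H →L[ℂ] H)
  | 0, _ => 1
  | 1, e => T e
  | n + 2, p => T p.val.1 * pathOp T (n + 1) p.val.2

section AuxLemmas

open scoped InnerProductSpace

variable {U : Type} [Fintype U] [DecidableEq U] {M : Matrix U U ℕ}
  {H : Type} [NormedAddCommGroup H] [InnerProductSpace ℂ H] [CompleteSpace H]

/-- Edge operators of a CK family are partial isometries. -/
lemma CKFam.pisom (F : CKFam M H) (e : Edge M) :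
    F.T e * star (F.T e) * F.T e = F.T e := by
  set t := F.T e with ht
  set p := F.P (Edge.rng e) with hp
  have h1 : star t * t = p := F.ck1 e
  have h1' : ∀ X : H →L[ℂ] H, star t * (t * X) = p * X := fun X => by
    rw [← mul_assoc, h1]
  have hpp : p * p = p := F.proj _
  have hpp' : ∀ X : H →L[ℂ] H, p * (p * X) = p * X := fun X => by
    rw [← mul_assoc, hpp]
  have key : star (t * star t * t - t) * (t * star t * t - t) = 0 := by
    simp only [star_sub, star_mul, star_star, sub_mul, mul_sub, mul_assoc, h1', h1, hpp', hpp]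
    abel
  exact sub_eq_zero.mp ((CStarRing.star_mul_self_eq_zero_iff (t * star t * t - t)).mp key)

/-- For a self-adjoint idempotent, `⟪P z, P z⟫ = ⟪z, P z⟫`. -/
lemma CKFam.inner_P (F : CKFam M H) (u : U) (z : H) :
    ⟪F.P u z, F.P u z⟫_ℂ = ⟪z, F.P u z⟫_ℂ := by
  have h2 : (ContinuousLinearMap.adjoint (F.P u)) (F.P u z) = F.P u z := by
    rw [← ContinuousLinearMap.star_eq_adjoint, F.selfadj u]
    exact congrArg (fun (X : H →L[ℂ] H) => X z) (F.proj u)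
  calc ⟪F.P u z, F.P u z⟫_ℂ
      = ⟪z, (ContinuousLinearMap.adjoint (F.P u)) (F.P u z)⟫_ℂ := by
        rw [ContinuousLinearMap.adjoint_inner_right]
    _ = ⟪z, F.P u z⟫_ℂ := by rw [h2]

/-- The source projection absorbs the edge operator from the left. -/
lemma CKFam.srcP (F : CKFam M H) (e : Edge M) :
    F.P (Edge.src e) * F.T e = F.T e := by
  have hpos : 0 < ∑ u', M (Edge.src e) u' := by
    have h1 : 0 < M (Edge.src e) (Edge.rng e) := lt_of_le_of_lt (Nat.zero_le _) e.property
    exact lt_of_lt_of_le h1 (Finset.single_le_sum (f := fun u' => M (Edge.src e) u')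
      (fun _ _ => Nat.zero_le _) (Finset.mem_univ _))
  have hck2 := F.ck2 (Edge.src e) hpos
  set u := Edge.src e with hu
  ext x
  set y := F.T e x with hy
  show F.P u (F.T e x) = F.T e x
  have hsum : ⟪y, F.P u y⟫_ℂ =
      ∑ f ∈ Finset.univ.filter (fun f : Edge M => Edge.src f = u),
        ⟪(ContinuousLinearMap.adjoint (F.T f)) y, (ContinuousLinearMap.adjoint (F.T f)) y⟫_ℂ := by
    have h0 : F.P u y = ∑ f ∈ Finset.univ.filter (fun f : Edge M => Edge.src f = u),
        (F.T f * star (F.T f)) y := by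
      rw [← ContinuousLinearMap.sum_apply, hck2]
    rw [h0, inner_sum]
    refine Finset.sum_congr rfl fun f _ => ?_
    show ⟪y, F.T f ((star (F.T f)) y)⟫_ℂ = _
    rw [ContinuousLinearMap.star_eq_adjoint, ← ContinuousLinearMap.adjoint_inner_left]
  have hsumr : RCLike.re ⟪y, F.P u y⟫_ℂ =
      ∑ f ∈ Finset.univ.filter (fun f : Edge M => Edge.src f = u),
        ‖(ContinuousLinearMap.adjoint (F.T f)) y‖ ^ 2 := by
    rw [hsum, map_sum]
    exact Finset.sum_congr rfl fun f _ => inner_self_eq_norm_sq _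
  have hPy : ‖F.P u y‖ ^ 2 = RCLike.re ⟪y, F.P u y⟫_ℂ := by
    rw [← F.inner_P u y, inner_self_eq_norm_sq]
  have he1 : (ContinuousLinearMap.adjoint (F.T e)) y = F.P (Edge.rng e) x := by
    rw [← ContinuousLinearMap.star_eq_adjoint]
    show (star (F.T e) * F.T e) x = _
    rw [F.ck1 e]
  have he2 : ‖y‖ ^ 2 = ‖F.P (Edge.rng e) x‖ ^ 2 := by
    have hyy : ⟪y, y⟫_ℂ = ⟪F.P (Edge.rng e) x, x⟫_ℂ := by
      conv_lhs => rw [hy, ← ContinuousLinearMap.adjoint_inner_left]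
      rw [← hy, he1]
    calc ‖y‖ ^ 2 = RCLike.re ⟪y, y⟫_ℂ := (inner_self_eq_norm_sq _).symm
      _ = RCLike.re ⟪F.P (Edge.rng e) x, x⟫_ℂ := by rw [hyy]
      _ = RCLike.re ⟪x, F.P (Edge.rng e) x⟫_ℂ := inner_re_symm _ _
      _ = RCLike.re ⟪F.P (Edge.rng e) x, F.P (Edge.rng e) x⟫_ℂ := by rw [F.inner_P]
      _ = ‖F.P (Edge.rng e) x‖ ^ 2 := inner_self_eq_norm_sq _
  have hge : ‖y‖ ^ 2 ≤ ‖F.P u y‖ ^ 2 := by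
    rw [hPy, hsumr]
    have hmem : e ∈ Finset.univ.filter (fun f : Edge M => Edge.src f = u) := by
      simp [hu]
    have hle := Finset.single_le_sum
      (f := fun f : Edge M => ‖(ContinuousLinearMap.adjoint (F.T f)) y‖ ^ 2)
      (fun f _ => sq_nonneg _) hmem
    rw [he2]
    simpa only [he1] using hle
  have hns : ‖y - F.P u y‖ ^ 2 = ‖y‖ ^ 2 - ‖F.P u y‖ ^ 2 := by
    rw [norm_sub_sq (𝕜 := ℂ), ← hPy]
    ring
  have hzero : ‖y - F.P u y‖ ^ 2 = 0 :=
    le_antisymm (by rw [hns]; linarith) (sq_nonneg _)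
  have hfin : y - F.P u y = 0 := by
    rw [pow_eq_zero_iff two_ne_zero, norm_eq_zero] at hzero
    exact hzero
  exact (sub_eq_zero.mp hfin).symm

/-- Source absorption for path operators. -/
lemma CKFam.srcPath (F : CKFam M H) :
    ∀ n (p : ((esys M).pow (n + 1)).E),
      F.P (((esys M).pow (n + 1)).src p) * pathOp F.T (n + 1) p = pathOp F.T (n + 1) p
  | 0, e => F.srcP e
  | n + 1, p => by
    show F.P (Edge.src p.val.1) * (F.T p.val.1 * pathOp F.T (n + 1) p.val.2) = _
    rw [← mul_assoc, F.srcP p.val.1]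
    rfl

/-- `S_μ* S_μ = P_{r(μ)}` for path operators. -/
lemma CKFam.rngPath (F : CKFam M H) :
    ∀ n (p : ((esys M).pow (n + 1)).E),
      star (pathOp F.T (n + 1) p) * pathOp F.T (n + 1) p
        = F.P (((esys M).pow (n + 1)).rng p)
  | 0, e => F.ck1 e
  | n + 1, p => by
    have hp : Edge.rng p.val.1 = ((esys M).pow (n + 1)).src p.val.2 := p.property
    show star (F.T p.val.1 * pathOp F.T (n + 1) p.val.2)
        * (F.T p.val.1 * pathOp F.T (n + 1) p.val.2)
      = F.P (((esys M).pow (n + 1)).rng p.val.2)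
    rw [star_mul, mul_assoc, ← mul_assoc (star (F.T p.val.1)), F.ck1 p.val.1, hp,
      F.srcPath n p.val.2, F.rngPath n p.val.2]

/-- If every vertex receives an edge, there are paths of any length into any
vertex. -/
lemma exists_path_into (hcol : ∀ u : U, ∃ e : Edge M, Edge.rng e = u) :
    ∀ n (u : U), ∃ p : ((esys M).pow n).E, ((esys M).pow n).rng p = u
  | 0, u => ⟨u, rfl⟩
  | 1, u => hcol u
  | n + 2, u => by
    obtain ⟨q, hq⟩ := exists_path_into hcol (n + 1) u
    obtain ⟨e, he⟩ := hcol (((esys M).pow (n + 1)).src q)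
    exact ⟨⟨(e, q), he⟩, hq⟩

end AuxLemmas

/-- in a representable shift equivalence with `A` and `B` having
no zero columns, the vertex projections of the two Cuntz–Krieger families
agree: if `(S_v, S_c)` is a Cuntz–Krieger family for `G_C` and `(T_w, T_d)` one
for `G_D` on the same Hilbert space, satisfying `T_{d₁d₂} = S_{c₁⋯c_m}`
whenever `ψ(d₁d₂) = c₁⋯c_m`, then `S_v = T_v` for every vertex `v ∈ V ⊔ W`. -/
theorem representable_vertex_projections_agree
    {V W : Type} [Fintype V] [Fintype W] [DecidableEq V] [DecidableEq W]
    {H : Type} [NormedAddCommGroup H] [InnerProductSpace ℂ H] [CompleteSpace H]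
    (A : Matrix V V ℕ) (B : Matrix W W ℕ)
    (R : Matrix V W ℕ) (S : Matrix W V ℕ)
    (hA : ∀ w, ∃ v, A v w ≠ 0) (hB : ∀ w, ∃ v, B v w ≠ 0)
    (m : ℕ) (hm : 0 < m)
    (ψ : PIso ((esys (Matrix.fromBlocks 0 R S 0)).pow 2)
          ((esys (Matrix.fromBlocks A 0 0 B)).pow m))
    (SF : CKFam (Matrix.fromBlocks A 0 0 B) H)
    (TF : CKFam (Matrix.fromBlocks 0 R S 0) H)
    (hint : ∀ p, pathOp TF.T 2 p = pathOp SF.T m (ψ.e p)) :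
    ∀ u, SF.P u = TF.P u := by
  intro u
  obtain ⟨k, rfl⟩ : ∃ k, m = k + 1 := ⟨m - 1, (Nat.succ_pred_eq_of_pos hm).symm⟩
  have hcol : ∀ u : V ⊕ W, ∃ e : Edge (Matrix.fromBlocks A 0 0 B), Edge.rng e = u := by
    rintro (v | w)
    · obtain ⟨v', hv'⟩ := hA v
      exact ⟨⟨(Sum.inl v', Sum.inl v, 0), by
        simpa [Matrix.fromBlocks] using Nat.pos_of_ne_zero hv'⟩, rfl⟩
    · obtain ⟨w', hw'⟩ := hB w
      exact ⟨⟨(Sum.inr w', Sum.inr w, 0), by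
        simpa [Matrix.fromBlocks] using Nat.pos_of_ne_zero hw'⟩, rfl⟩
  obtain ⟨μ, hμ⟩ := exists_path_into hcol (k + 1) u
  set p := ψ.e.symm μ with hpdef
  have hep : ψ.e p = μ := ψ.e.apply_symm_apply μ
  have hrng : ((esys (Matrix.fromBlocks 0 R S 0)).pow 2).rng p = u := by
    rw [← ψ.rng_eq p, hep, hμ]
  calc SF.P u = star (pathOp SF.T (k + 1) μ) * pathOp SF.T (k + 1) μ := by
        rw [SF.rngPath k μ, hμ]
    _ = star (pathOp TF.T 2 p) * pathOp TF.T 2 p := by rw [hint p, hep]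
    _ = TF.P u := by rw [TF.rngPath 1 p, hrng]
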